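/- For every c > 0, the length of the Euclidean circle of radius c with respect to the cigar metric g_c equals 2πc/√(1 + c²): explicitly, for γ_c(θ) = (c·cos θ, c·sin θ), one has ∫₀^{2π} ‖γ_c'(θ)‖/√(1 + ‖γ_c(θ)‖²) dθ = 2πc/√(1 + c²). In particular this length is strictly less than 2π for every c > 0, and sup_{c>0} 2πc/√(1 + c²) = 2π; hence the proper function F(p) = ‖p‖ has width w(F) = 2π with respect to g_c, so the width of the cigar metric satisfies w(g_c) ≤ 2π < ∞. -/

import Mathlib

open Real

/-- The Euclidean circle of radius `c`, as a curve in ℝ². -/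
noncomputable def circleCurve (c : ℝ) (θ : ℝ) : EuclideanSpace ℝ (Fin 2) :=
  (WithLp.equiv 2 (Fin 2 → ℝ)).symm ![c * Real.cos θ, c * Real.sin θ]

lemma norm_aux (a b : ℝ) :
    ‖(WithLp.equiv 2 (Fin 2 → ℝ)).symm ![a, b]‖ = Real.sqrt (a ^ 2 + b ^ 2) := by
  simp [EuclideanSpace.norm_eq, Fin.sum_univ_two, sq_abs]

lemma hasDerivAt_circleCurve (c θ : ℝ) :
    HasDerivAt (circleCurve c)
      ((WithLp.equiv 2 (Fin 2 → ℝ)).symm ![-(c * Real.sin θ), c * Real.cos θ]) θ := by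
  have hf : HasDerivAt (fun t => ![c * Real.cos t, c * Real.sin t] : ℝ → Fin 2 → ℝ)
      ![-(c * Real.sin θ), c * Real.cos θ] θ := by
    rw [hasDerivAt_pi]
    intro i
    fin_cases i
    · simpa [mul_comm] using (Real.hasDerivAt_cos θ).const_mul c
    · simpa [mul_comm] using (Real.hasDerivAt_sin θ).const_mul c
  exact ((PiLp.continuousLinearEquiv 2 ℝ
      (fun _ : Fin 2 => ℝ)).symm.toContinuousLinearMap.hasFDerivAt.comp_hasDerivAt θ hf)

lemma lt_sqrt_one_add (c : ℝ) (hc : 0 < c) : c < Real.sqrt (1 + c ^ 2) := by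
  nlinarith [Real.sq_sqrt (show (0:ℝ) ≤ 1 + c ^ 2 by positivity),
    Real.sqrt_nonneg (1 + c ^ 2)]

lemma len_eq (c : ℝ) (hc : 0 < c) :
    2 * π * c / Real.sqrt (1 + c ^ 2) = 2 * π * Real.sqrt (1 - 1 / (1 + c ^ 2)) := by
  have h1 : (0:ℝ) < 1 + c ^ 2 := by positivity
  have h2 : 1 - 1 / (1 + c ^ 2) = c ^ 2 / (1 + c ^ 2) := by field_simp; ring
  rw [h2, Real.sqrt_div (by positivity) _, Real.sqrt_sq hc.le, mul_div_assoc]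

/-- For every `c > 0`, the cigar length of the Euclidean circle of radius `c` is
`2πc/√(1+c²)`, which is strictly less than `2π`; and the supremum over `c > 0` of
these lengths is `2π`.  Hence the proper function `F(p) = ‖p‖` has width `2π` with
respect to the cigar metric, so `w(g_c) ≤ 2π < ∞`. -/
theorem cigar_circle_lengths_and_width :
    (∀ c : ℝ, 0 < c →
      (∫ θ in (0:ℝ)..(2 * π),
          ‖deriv (circleCurve c) θ‖ / Real.sqrt (1 + ‖circleCurve c θ‖ ^ 2)) =
        2 * π * c / Real.sqrt (1 + c ^ 2)) ∧
    (∀ c : ℝ, 0 < c → 2 * π * c / Real.sqrt (1 + c ^ 2) < 2 * π) ∧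
    (⨆ c : {c : ℝ // 0 < c}, 2 * π * (c : ℝ) / Real.sqrt (1 + (c : ℝ) ^ 2)) = 2 * π := by
  have part2 : ∀ c : ℝ, 0 < c → 2 * π * c / Real.sqrt (1 + c ^ 2) < 2 * π := by
    intro c hc
    have hs : 0 < Real.sqrt (1 + c ^ 2) := Real.sqrt_pos.2 (by positivity)
    rw [div_lt_iff₀ hs]
    nlinarith [lt_sqrt_one_add c hc, pi_pos]
  refine ⟨?_, part2, ?_⟩
  · intro c hc
    have h1 : ∀ θ : ℝ, ‖deriv (circleCurve c) θ‖ = c := by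
      intro θ
      rw [(hasDerivAt_circleCurve c θ).deriv, norm_aux]
      have : (-(c * Real.sin θ)) ^ 2 + (c * Real.cos θ) ^ 2 = c ^ 2 := by
        nlinarith [Real.sin_sq_add_cos_sq θ]
      rw [this, Real.sqrt_sq hc.le]
    have h2 : ∀ θ : ℝ, ‖circleCurve c θ‖ = c := by
      intro θ
      rw [circleCurve, norm_aux]
      have : (c * Real.cos θ) ^ 2 + (c * Real.sin θ) ^ 2 = c ^ 2 := by
        nlinarith [Real.sin_sq_add_cos_sq θ]
      rw [this, Real.sqrt_sq hc.le]
    simp_rw [h1, h2]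
    rw [intervalIntegral.integral_const, smul_eq_mul]
    ring
  · have hbdd : BddAbove (Set.range fun c : {c : ℝ // 0 < c} =>
        2 * π * (c : ℝ) / Real.sqrt (1 + (c : ℝ) ^ 2)) := by
      refine ⟨2 * π, ?_⟩
      rintro x ⟨⟨c, hc⟩, rfl⟩
      exact (part2 c hc).le
    refine le_antisymm (ciSup_le fun ⟨c, hc⟩ => (part2 c hc).le) ?_
    have hsmall : Filter.Tendsto (fun n : ℕ => (1:ℝ) / (1 + ((n:ℝ) + 1) ^ 2))
        Filter.atTop (nhds 0) := by
      apply squeeze_zero (fun n => by positivity)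
        (fun n => ?_) tendsto_one_div_add_atTop_nhds_zero_nat
      apply div_le_div_of_nonneg_left (by norm_num) (by positivity)
      nlinarith [Nat.cast_nonneg (α := ℝ) n]
    have h1 : Filter.Tendsto (fun n : ℕ => 2 * π * Real.sqrt (1 - 1 / (1 + ((n:ℝ) + 1) ^ 2)))
        Filter.atTop (nhds (2 * π)) := by
      have := ((tendsto_const_nhds (x := (1:ℝ)).sub hsmall).sqrt).const_mul (2 * π)
      simpa using this
    have h2 : Filter.Tendsto (fun n : ℕ => 2 * π * ((n:ℝ) + 1) / Real.sqrt (1 + ((n:ℝ) + 1) ^ 2))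
        Filter.atTop (nhds (2 * π)) := by
      refine h1.congr fun n => ?_
      exact (len_eq ((n:ℝ) + 1) (by positivity)).symm
    refine le_of_tendsto h2 (Filter.Eventually.of_forall fun n => ?_)
    exact le_ciSup hbdd ⟨(n:ℝ) + 1, by positivity⟩
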